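/- For each n ≥ 1, the subset X_{≤n} of mm-isomorphism classes of metric measure spaces whose support has at most n points is closed in the space X_fin of mm-isomorphism classes of metric measure spaces with finite support, equipped with the box distance. -/
import Mathlib


open MeasureTheory

/-- The distortion of a relation `S ⊆ X × Y` between metric spaces. -/
noncomputable def relDis {X Y : Type*} [MetricSpace X] [MetricSpace Y] (S : Set (X × Y)) : ℝ :=
  sSup {v | ∃ p ∈ S, ∃ q ∈ S, v = |dist p.1 q.1 - dist p.2 q.2|}

/-- The box distance between two metric measure spaces. -/
noncomputable def boxDist (X Y : Type*) [MetricSpace X] [MetricSpace Y]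
    [MeasurableSpace X] [MeasurableSpace Y] (μ : Measure X) (ν : Measure Y) : ℝ :=
  sInf {v | ∃ π : Measure (X × Y), π.map Prod.fst = μ ∧ π.map Prod.snd = ν ∧
    ∃ S : Set (X × Y), IsClosed S ∧ v = max (1 - (π S).toReal) (relDis S)}

/-- `X_{≤ n}` is closed in `X_fin`: every finite metric measure space with full support and
more than `n` points has, for some `δ > 0`, box distance at least `δ` from every metric
measure space with at most `n` points (i.e. the complement of `X_{≤ n}` is open). -/
theorem stmt7 (n : ℕ) (hn : 1 ≤ n)
    {X : Type} [MetricSpace X] [MeasurableSpace X] [BorelSpace X] [Fintype X] [Nonempty X]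
    (μ : Measure X) [IsProbabilityMeasure μ] (hsuppX : ∀ x : X, 0 < μ {x})
    (hcard : n < Nat.card X) :
    ∃ δ > (0 : ℝ), ∀ (Y : Type) [MetricSpace Y] [MeasurableSpace Y] [BorelSpace Y]
      [Fintype Y] [Nonempty Y] (ν : Measure Y), IsProbabilityMeasure ν →
      (∀ y : Y, 0 < ν {y}) → Nat.card Y ≤ n → δ ≤ boxDist X Y μ ν := by
  classical
  have hX : n < Fintype.card X := by rwa [Nat.card_eq_fintype_card] at hcard
  obtain ⟨a, b, hab⟩ := Fintype.exists_pair_of_one_lt_card (lt_of_le_of_lt hn hX)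
  set ε : ℝ := Finset.univ.inf' Finset.univ_nonempty (fun x : X => (μ {x}).toReal) with hεdef
  have hε : 0 < ε := by
    rw [hεdef, Finset.lt_inf'_iff]
    intro x _
    exact ENNReal.toReal_pos (hsuppX x).ne' (measure_ne_top μ _)
  have hε_le : ∀ x : X, ε ≤ (μ {x}).toReal := fun x =>
    Finset.inf'_le _ (Finset.mem_univ x)
  set P : Finset (X × X) := Finset.univ.filter (fun p : X × X => p.1 ≠ p.2) with hPdef
  have hP : P.Nonempty := ⟨(a, b), by simp [hPdef, hab]⟩
  set r : ℝ := P.inf' hP (fun p => dist p.1 p.2) with hrdef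
  have hr : 0 < r := by
    rw [hrdef, Finset.lt_inf'_iff]
    intro p hp
    rw [hPdef, Finset.mem_filter] at hp
    exact dist_pos.2 hp.2
  have hr_le : ∀ x y : X, x ≠ y → r ≤ dist x y := by
    intro x y h
    have hmem : (x, y) ∈ P := by simp [hPdef, h]
    exact Finset.inf'_le (fun p => dist p.1 p.2) hmem
  refine ⟨min ε r, lt_min hε hr, ?_⟩
  intro Y _ _ _ _ _ ν hνprob hνsupp hYcard
  have hYX : Fintype.card Y < Fintype.card X := by
    rw [Nat.card_eq_fintype_card] at hYcard
    exact lt_of_le_of_lt hYcard hX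
  apply le_csInf
  · refine ⟨_, μ.prod ν, ?_, ?_, Set.univ, isClosed_univ, rfl⟩
    · simp
    · simp
  · rintro v ⟨π, hπ1, hπ2, S, hSclosed, rfl⟩
    have hπuniv : π Set.univ = 1 := by
      have := congrArg (fun m : Measure X => m Set.univ) hπ1
      simp only [Measure.map_apply measurable_fst MeasurableSet.univ, Set.preimage_univ] at this
      simpa using this
    haveI : IsProbabilityMeasure π := ⟨hπuniv⟩
    by_cases hc : (π S).toReal ≤ 1 - min ε r
    · exact le_max_of_le_left (by linarith)
    · push_neg at hc
      have hpartner : ∀ x : X, ∃ y : Y, (x, y) ∈ S := by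
        intro x
        by_contra h
        push_neg at h
        have hdisj : Disjoint S (((Prod.fst ⁻¹' ({x} : Set X)) : Set (X × Y))) := by
          rw [Set.disjoint_left]
          rintro ⟨x', y⟩ hS hx
          simp only [Set.mem_preimage, Set.mem_singleton_iff] at hx
          subst hx
          exact h y hS
        have hmeas : MeasurableSet (((Prod.fst ⁻¹' ({x} : Set X)) : Set (X × Y))) :=
          measurable_fst (measurableSet_singleton x)
        have hA : π (((Prod.fst ⁻¹' ({x} : Set X)) : Set (X × Y))) = μ {x} := by
          rw [← hπ1, Measure.map_apply measurable_fst (measurableSet_singleton x)]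
        have hsum : π S + μ {x} ≤ 1 := by
          rw [← hA, ← measure_union hdisj hmeas]
          exact (measure_mono (Set.subset_univ _)).trans_eq hπuniv
        have h1 : (π S).toReal + (μ {x}).toReal ≤ 1 := by
          have := ENNReal.toReal_mono ENNReal.one_ne_top hsum
          rwa [ENNReal.toReal_add (measure_ne_top π S) (measure_ne_top μ _),
            ENNReal.toReal_one] at this
        have h2 : ε ≤ (μ {x}).toReal := hε_le x
        have h3 : min ε r ≤ ε := min_le_left _ _
        linarith
      choose f hf using hpartner
      obtain ⟨x₁, x₂, hne, hfe⟩ := Fintype.exists_ne_map_eq_of_card_lt f hYX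
      have hmem : dist x₁ x₂ ∈
          {v | ∃ p ∈ S, ∃ q ∈ S, v = |dist p.1 q.1 - dist p.2 q.2|} := by
        refine ⟨(x₁, f x₁), hf x₁, (x₂, f x₂), hf x₂, ?_⟩
        simp only
        rw [hfe, dist_self, sub_zero, abs_of_nonneg dist_nonneg]
      have hfin : {v | ∃ p ∈ S, ∃ q ∈ S, v = |dist p.1 q.1 - dist p.2 q.2|}.Finite := by
        apply Set.Finite.subset (Set.finite_range
          (fun pq : (X × Y) × (X × Y) => |dist pq.1.1 pq.2.1 - dist pq.1.2 pq.2.2|))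
        rintro v ⟨p, hp, q, hq, rfl⟩
        exact ⟨(p, q), rfl⟩
      have hrel : dist x₁ x₂ ≤ relDis S := le_csSup hfin.bddAbove hmem
      have : min ε r ≤ relDis S :=
        le_trans (min_le_right _ _) (le_trans (hr_le x₁ x₂ hne) hrel)
      exact le_max_of_le_right this
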